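/- arXiv:1601.06632 — 3 statements merged into one kernel-verified Lean document; each statement's English description precedes it below -/
import Mathlib

section
/- Let N ≥ 1 and let u : ℝ^N → ℝ be a C², ℤ^N-periodic admissible function. Then for every x ∈ ℝ^N one has ‖∇u(x)‖² ≤ e^{2·osc(u)} − 1, where osc(u) = sup u − inf u. -/
open Matrix Real

/-- The `i`-th partial derivative (gradient component) of `u` at `x`. -/
noncomputable def grad {N : ℕ} (u : (Fin N → ℝ) → ℝ) (x : Fin N → ℝ) (i : Fin N) : ℝ :=
  fderiv ℝ u x (Pi.single i 1)

/-- The `(i,j)` entry of the Hessian matrix of `u` at `x`. -/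
noncomputable def hess {N : ℕ} (u : (Fin N → ℝ) → ℝ) (x : Fin N → ℝ) (i j : Fin N) : ℝ :=
  fderiv ℝ (fun y => fderiv ℝ u y (Pi.single j 1)) x (Pi.single i 1)

/-- The squared norm of the gradient of `u` at `x`. -/
noncomputable def gradSq {N : ℕ} (u : (Fin N → ℝ) → ℝ) (x : Fin N → ℝ) : ℝ :=
  ∑ i, (grad u x i) ^ 2

/-- The Laplacian of `u` at `x` (trace of the Hessian). -/
noncomputable def lap {N : ℕ} (u : (Fin N → ℝ) → ℝ) (x : Fin N → ℝ) : ℝ :=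
  ∑ i, hess u x i i

/-- The matrix `A[u](x) = I + ∇u(x) (∇u(x))ᵀ − Hess u(x)`. -/
noncomputable def amat {N : ℕ} (u : (Fin N → ℝ) → ℝ) (x : Fin N → ℝ) :
    Matrix (Fin N) (Fin N) ℝ :=
  1 + Matrix.of (fun i j => grad u x i * grad u x j) - Matrix.of (fun i j => hess u x i j)

/-- `u` is `ℤ^N`-periodic. -/
def ZPeriodic {N : ℕ} (u : (Fin N → ℝ) → ℝ) : Prop :=
  ∀ (x : Fin N → ℝ) (k : Fin N → ℤ), u (x + fun i => (k i : ℝ)) = u x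

/-- `u` is admissible: `A[u](x)` is positive definite for every `x`. -/
def Admissible {N : ℕ} (u : (Fin N → ℝ) → ℝ) : Prop :=
  ∀ x, (amat u x).PosDef

/-- A shift lemma for `fderiv`. -/
lemma fderiv_shift_aux {N : ℕ} (u : (Fin N → ℝ) → ℝ) (hu : Differentiable ℝ u)
    (x c : Fin N → ℝ) :
    fderiv ℝ (fun y => u (y + c)) x = fderiv ℝ u (x + c) := by
  have h : HasFDerivAt (fun y : Fin N → ℝ => y + c)
      (ContinuousLinearMap.id ℝ (Fin N → ℝ)) x :=
    (hasFDerivAt_id x).add_const c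
  have h2 := ((hu (x + c)).hasFDerivAt).comp x h
  simpa [Function.comp_def] using h2.fderiv

/-- Periodicity of the gradient. -/
lemma grad_periodic_aux {N : ℕ} (u : (Fin N → ℝ) → ℝ) (hu : Differentiable ℝ u)
    (hper : ZPeriodic u) (x : Fin N → ℝ) (k : Fin N → ℤ) :
    grad u (x + fun i => (k i : ℝ)) = grad u x := by
  funext i
  have hfun : (fun y => u (y + fun i => (k i : ℝ))) = u := funext fun y => hper y k
  have := fderiv_shift_aux u hu x (fun i => (k i : ℝ))
  rw [hfun] at this
  simp only [grad, ← this]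

/-- Decomposition into a fundamental-domain point plus an integer vector. -/
lemma decomp_aux {N : ℕ} (y : Fin N → ℝ) :
    ∃ z ∈ Set.Icc (0 : Fin N → ℝ) 1, ∃ k : Fin N → ℤ, y = z + fun i => (k i : ℝ) := by
  refine ⟨fun i => Int.fract (y i), ?_, fun i => ⌊y i⌋, ?_⟩
  · constructor
    · intro i; exact Int.fract_nonneg _
    · intro i; exact (Int.fract_lt_one _).le
  · funext i
    simp only [Pi.add_apply]
    rw [Int.fract]
    ring

/-- Gradient estimate for admissible periodic functions:
`‖∇u(x)‖² ≤ e^{2 osc(u)} − 1` where `osc(u) = sup u − inf u`. -/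
theorem stmt0 {N : ℕ} (hN : 1 ≤ N) (u : (Fin N → ℝ) → ℝ)
    (hu : ContDiff ℝ 2 u) (hper : ZPeriodic u) (hadm : Admissible u) :
    ∀ x : Fin N → ℝ,
      gradSq u x ≤ Real.exp (2 * (sSup (Set.range u) - sInf (Set.range u))) - 1 := by
  classical
  have hud : Differentiable ℝ u := hu.differentiable (by norm_num)
  have hΦ : ContDiff ℝ 1 (fderiv ℝ u) := hu.fderiv_right (by norm_num)
  have hG : ∀ j, ContDiff ℝ 1 (fun y => grad u y j) := fun j =>
    hΦ.clm_apply contDiff_const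
  have hGd : ∀ j, Differentiable ℝ (fun y => grad u y j) := fun j =>
    (hG j).differentiable (by norm_num)
  have hSc : Continuous (gradSq u) := by
    apply continuous_finset_sum
    intro j _
    exact ((hG j).continuous).pow 2
  -- the auxiliary function f
  set f : (Fin N → ℝ) → ℝ := fun y => Real.exp (-2 * u y) * (1 + gradSq u y) with hf_def
  have hfc : Continuous f :=
    ((Real.continuous_exp).comp (continuous_const.mul hu.continuous)).mul
      (continuous_const.add hSc)
  -- periodicity of f
  have hSper : ∀ (x : Fin N → ℝ) (k : Fin N → ℤ),
      gradSq u (x + fun i => (k i : ℝ)) = gradSq u x := by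
    intro x k
    unfold gradSq
    rw [grad_periodic_aux u hud hper x k]
  have hfper : ∀ (x : Fin N → ℝ) (k : Fin N → ℤ),
      f (x + fun i => (k i : ℝ)) = f x := by
    intro x k
    simp only [hf_def, hper x k, hSper x k]
  -- the fundamental domain
  set K : Set (Fin N → ℝ) := Set.Icc 0 1 with hK_def
  have hK : IsCompact K := isCompact_Icc
  have h0K : (0 : Fin N → ℝ) ∈ K := by
    constructor <;> intro i <;> norm_num
  -- boundedness of the range of u
  have hrange : Set.range u ⊆ u '' K := by
    rintro _ ⟨y, rfl⟩
    obtain ⟨z, hzK, k, hzk⟩ := decomp_aux y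
    exact ⟨z, hzK, by rw [hzk, hper z k]⟩
  have himg : IsCompact (u '' K) := hK.image hu.continuous
  have hbddA : BddAbove (Set.range u) := (himg.bddAbove).mono hrange
  have hbddB : BddBelow (Set.range u) := (himg.bddBelow).mono hrange
  -- f attains its maximum
  obtain ⟨x₀, hx₀K, hmaxK⟩ := hK.exists_isMaxOn ⟨0, h0K⟩ hfc.continuousOn
  have hmax : ∀ y, f y ≤ f x₀ := by
    intro y
    obtain ⟨z, hzK, k, hzk⟩ := decomp_aux y
    have : f y = f z := by rw [hzk, hfper z k]
    rw [this]
    exact hmaxK hzK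
  -- stationarity at x₀
  set p : Fin N → ℝ := grad u x₀ with hp_def
  set S : ℝ := gradSq u x₀ with hS_def
  set Du : (Fin N → ℝ) →L[ℝ] ℝ := fderiv ℝ u x₀ with hDu_def
  set Dj : Fin N → ((Fin N → ℝ) →L[ℝ] ℝ) :=
    fun j => fderiv ℝ (fun y => grad u y j) x₀ with hDj_def
  have hDu : HasFDerivAt u Du x₀ := (hud x₀).hasFDerivAt
  have hA : HasFDerivAt (fun y => Real.exp (-2 * u y))
      (Real.exp (-2 * u x₀) • ((-2 : ℝ) • Du)) x₀ := by
    exact (hDu.const_mul (-2)).exp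
  have hDjj : ∀ j, HasFDerivAt (fun y => grad u y j) (Dj j) x₀ :=
    fun j => (hGd j x₀).hasFDerivAt
  have hsq : ∀ j, HasFDerivAt (fun y => (grad u y j) ^ 2)
      ((2 * p j) • Dj j) x₀ := by
    intro j
    have := (hDjj j).mul (hDjj j)
    have h2 : (2 * p j) • Dj j = p j • Dj j + p j • Dj j := by
      rw [two_mul, add_smul]
    rw [h2]
    simpa [pow_two, Pi.mul_def] using this
  have hBsum : HasFDerivAt (gradSq u) (∑ j, (2 * p j) • Dj j) x₀ := by
    have := HasFDerivAt.sum (fun j (_ : j ∈ Finset.univ) => hsq j)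
    have e : gradSq u = ∑ i, fun y => grad u y i ^ 2 := by funext y; simp [gradSq]
    rw [e]; exact this
  have hB : HasFDerivAt (fun y => 1 + gradSq u y) (∑ j, (2 * p j) • Dj j) x₀ :=
    hBsum.const_add 1
  have hfd : HasFDerivAt f
      (Real.exp (-2 * u x₀) • (∑ j, (2 * p j) • Dj j)
        + (1 + S) • (Real.exp (-2 * u x₀) • ((-2 : ℝ) • Du))) x₀ := hA.mul hB
  have hloc : IsLocalMax f x₀ := Filter.Eventually.of_forall hmax
  have hfder0 : fderiv ℝ f x₀ = 0 := hloc.fderiv_eq_zero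
  have hf'0 : (Real.exp (-2 * u x₀) • (∑ j, (2 * p j) • Dj j)
        + (1 + S) • (Real.exp (-2 * u x₀) • ((-2 : ℝ) • Du))) = 0 := by
    rw [← hfd.fderiv]; exact hfder0
  have hDjval : ∀ i j, Dj j (Pi.single i 1) = hess u x₀ i j := fun i j => rfl
  have hDuval : ∀ i, Du (Pi.single i 1) = p i := fun i => rfl
  have hE : (0 : ℝ) < Real.exp (-2 * u x₀) := Real.exp_pos _
  have hstat : ∀ i, ∑ j, p j * hess u x₀ i j = (1 + S) * p i := by
    intro i
    have h0 := congrArg (fun (L : (Fin N → ℝ) →L[ℝ] ℝ) => L (Pi.single i 1)) hf'0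
    simp only [ContinuousLinearMap.add_apply, ContinuousLinearMap.smul_apply,
      ContinuousLinearMap.coe_sum', Finset.sum_apply, ContinuousLinearMap.zero_apply,
      smul_eq_mul] at h0
    rw [hDuval i] at h0
    have h1 : ∑ j, (2 * p j) * (Dj j) (Pi.single i 1)
        = 2 * ∑ j, p j * hess u x₀ i j := by
      rw [Finset.mul_sum]
      apply Finset.sum_congr rfl
      intro j _
      rw [hDjval i j]; ring
    rw [h1] at h0
    have hEne : Real.exp (-2 * u x₀) ≠ 0 := ne_of_gt hE
    have : Real.exp (-2 * u x₀) * (2 * ∑ j, p j * hess u x₀ i j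
        - 2 * ((1 + S) * p i)) = 0 := by ring_nf; ring_nf at h0; linarith
    have h2 := (mul_eq_zero.mp this).resolve_left hEne
    linarith
  -- the gradient vanishes at x₀
  have hp0 : p = 0 := by
    by_contra hp
    have hAp : amat u x₀ *ᵥ p = 0 := by
      funext i
      have e1 : (amat u x₀ *ᵥ p) i = ∑ j, ((if i = j then (1:ℝ) else 0)
          + p i * p j - hess u x₀ i j) * p j := by
        simp [amat, Matrix.mulVec, dotProduct, Matrix.one_apply,
          Matrix.sub_apply, Matrix.add_apply, ← hp_def]
      rw [e1]
      have e2 : ∑ j, ((if i = j then (1:ℝ) else 0) + p i * p j - hess u x₀ i j) * p j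
          = (∑ j, (if i = j then (1:ℝ) else 0) * p j) + p i * (∑ j, p j * p j)
            - ∑ j, p j * hess u x₀ i j := by
        rw [Finset.mul_sum, ← Finset.sum_add_distrib, ← Finset.sum_sub_distrib]
        apply Finset.sum_congr rfl
        intro j _; ring
      rw [e2, hstat i]
      have e3 : (∑ j, (if i = j then (1:ℝ) else 0) * p j) = p i := by
        simp [Finset.sum_ite_eq]
      have e4 : (∑ j, p j * p j) = S := by
        rw [hS_def]
        unfold gradSq
        apply Finset.sum_congr rfl
        intro j _; rw [← hp_def]; ring
      rw [e3, e4, Pi.zero_apply]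
      ring
    have hpos := (hadm x₀).dotProduct_mulVec_pos hp
    rw [hAp] at hpos
    simp at hpos
  have hS0 : S = 0 := by
    have hz : ∀ j, grad u x₀ j = 0 := fun j => by simpa using congrFun hp0 j
    rw [hS_def]
    unfold gradSq
    apply Finset.sum_eq_zero
    intro j _
    rw [hz j]
    ring
  -- conclusion
  intro x
  have hfx : Real.exp (-2 * u x) * (1 + gradSq u x) ≤ Real.exp (-2 * u x₀) := by
    have := hmax x
    simp only [hf_def] at this
    calc Real.exp (-2 * u x) * (1 + gradSq u x) ≤ Real.exp (-2 * u x₀) * (1 + S) := this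
      _ = Real.exp (-2 * u x₀) := by rw [hS0]; ring
  have hux : u x ≤ sSup (Set.range u) := le_csSup hbddA ⟨x, rfl⟩
  have hux₀ : sInf (Set.range u) ≤ u x₀ := csInf_le hbddB ⟨x₀, rfl⟩
  have key : 1 + gradSq u x ≤ Real.exp (2 * (sSup (Set.range u) - sInf (Set.range u))) := by
    have h1 : 1 + gradSq u x
        = Real.exp (2 * u x) * (Real.exp (-2 * u x) * (1 + gradSq u x)) := by
      rw [← mul_assoc, ← Real.exp_add]
      norm_num
    rw [h1]
    calc Real.exp (2 * u x) * (Real.exp (-2 * u x) * (1 + gradSq u x))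
        ≤ Real.exp (2 * u x) * Real.exp (-2 * u x₀) :=
          mul_le_mul_of_nonneg_left hfx (Real.exp_pos _).le
      _ = Real.exp (2 * u x - 2 * u x₀) := by rw [← Real.exp_add]; ring_nf
      _ ≤ Real.exp (2 * (sSup (Set.range u) - sInf (Set.range u))) := by
          apply Real.exp_le_exp.2
          linarith
  linarith
end

section
/- Let N ≥ 1, let p ≥ 0 and λ > 0 be real numbers, and let f : ℝ^N → ℝ be a continuous, ℤ^N-periodic, everywhere strictly positive function. Let u : ℝ^N → ℝ be a C², ℤ^N-periodic function satisfying det A[u](x) = e^{−λu(x)} · f(x) · (1 + ‖∇u(x)‖²)^p for all x. Then ‖u‖_∞ ≤ λ^{−1} · ‖log f‖_∞. -/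
open Matrix Real

section OneD

/-- At a global max of `g` at `0`, the second derivative is nonpositive. -/
lemma deriv2_nonpos_at_max {g g1 : ℝ → ℝ} {c : ℝ} (hg : ∀ t, HasDerivAt g (g1 t) t)
    (h0 : HasDerivAt g1 c 0) (hmax : ∀ t, g t ≤ g 0) : c ≤ 0 := by
  by_contra hc
  push_neg at hc
  have hg10 : g1 0 = 0 :=
    IsLocalMax.hasDerivAt_eq_zero (Filter.Eventually.of_forall hmax) (hg 0)
  have hslope : Filter.Tendsto (slope g1 0) (nhdsWithin 0 {(0:ℝ)}ᶜ) (nhds c) :=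
    hasDerivAt_iff_tendsto_slope.mp h0
  have h1 : ∀ᶠ t in nhdsWithin 0 {(0:ℝ)}ᶜ, 0 < slope g1 0 t :=
    hslope.eventually (eventually_gt_nhds hc)
  have h2 : nhdsWithin (0:ℝ) (Set.Ioi 0) ≤ nhdsWithin 0 {(0:ℝ)}ᶜ :=
    nhdsWithin_mono 0 fun t ht => ne_of_gt ht
  have hev : ∀ᶠ t in nhdsWithin (0:ℝ) (Set.Ioi 0), 0 < g1 t := by
    filter_upwards [h1.filter_mono h2, self_mem_nhdsWithin] with t ht ht'
    rw [slope_def_field, hg10, sub_zero, sub_zero] at ht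
    have ht0 : (0:ℝ) < t := ht'
    have := mul_pos ht ht0
    rwa [div_mul_cancel₀ _ (ne_of_gt ht0)] at this
  obtain ⟨δ, hδ, hsub⟩ := mem_nhdsGT_iff_exists_Ioo_subset.mp hev
  have hδ0 : (0:ℝ) < δ := hδ
  have hcont : ContinuousOn g (Set.Icc 0 δ) := fun t _ =>
    ((hg t).continuousAt).continuousWithinAt
  have hmono : StrictMonoOn g (Set.Icc 0 δ) := by
    refine strictMonoOn_of_deriv_pos (convex_Icc 0 δ) hcont ?_
    intro t ht
    rw [interior_Icc] at ht
    rw [(hg t).deriv]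
    exact hsub ht
  have h0m : (0:ℝ) ∈ Set.Icc (0:ℝ) δ := ⟨le_rfl, hδ0.le⟩
  have hδm : δ ∈ Set.Icc (0:ℝ) δ := ⟨hδ0.le, le_rfl⟩
  exact absurd (hmax δ) (not_le.mpr (hmono h0m hδm hδ0))

lemma deriv2_nonneg_at_min {g g1 : ℝ → ℝ} {c : ℝ} (hg : ∀ t, HasDerivAt g (g1 t) t)
    (h0 : HasDerivAt g1 c 0) (hmin : ∀ t, g 0 ≤ g t) : 0 ≤ c := by
  have := deriv2_nonpos_at_max (g := fun t => -g t) (g1 := fun t => -g1 t) (c := -c)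
    (fun t => (hg t).neg) h0.neg (fun t => neg_le_neg (hmin t))
  linarith

end OneD

section Spectral

variable {n : Type*} [Fintype n] [DecidableEq n]

lemma eig_ge_one {A : Matrix n n ℝ} (hA : A.IsHermitian) (h : (A - 1).PosSemidef) (i : n) :
    1 ≤ hA.eigenvalues i := by
  set v : n → ℝ := ⇑(hA.eigenvectorBasis i) with hv
  have hv0 : v ≠ 0 := by
    intro h0; apply hA.eigenvectorBasis.orthonormal.ne_zero i; ext k; simpa using congrFun h0 k
  have hAv : A *ᵥ v = hA.eigenvalues i • v := hA.mulVec_eigenvectorBasis i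
  have hdp : 0 < v ⬝ᵥ v := by
    obtain ⟨j, hj⟩ := Function.ne_iff.mp hv0
    refine Finset.sum_pos' (fun k _ => mul_self_nonneg _) ⟨j, Finset.mem_univ j, ?_⟩
    exact mul_self_pos.mpr hj
  have h2 := h.dotProduct_mulVec_nonneg v
  rw [star_trivial, sub_mulVec, one_mulVec, dotProduct_sub, hAv, dotProduct_smul,
    smul_eq_mul] at h2
  nlinarith

lemma eig_le_one {A : Matrix n n ℝ} (hA : A.IsHermitian) (h : ((1:Matrix n n ℝ) - A).PosSemidef)
    (i : n) : hA.eigenvalues i ≤ 1 := by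
  set v : n → ℝ := ⇑(hA.eigenvectorBasis i) with hv
  have hv0 : v ≠ 0 := by
    intro h0; apply hA.eigenvectorBasis.orthonormal.ne_zero i; ext k; simpa using congrFun h0 k
  have hAv : A *ᵥ v = hA.eigenvalues i • v := hA.mulVec_eigenvectorBasis i
  have hdp : 0 < v ⬝ᵥ v := by
    obtain ⟨j, hj⟩ := Function.ne_iff.mp hv0
    refine Finset.sum_pos' (fun k _ => mul_self_nonneg _) ⟨j, Finset.mem_univ j, ?_⟩
    exact mul_self_pos.mpr hj
  have h2 := h.dotProduct_mulVec_nonneg v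
  rw [star_trivial, sub_mulVec, one_mulVec, dotProduct_sub, hAv, dotProduct_smul,
    smul_eq_mul] at h2
  nlinarith

lemma det_ge_one_of_sub_one_psd {A : Matrix n n ℝ} (hA : A.IsHermitian)
    (h : (A - 1).PosSemidef) : 1 ≤ A.det := by
  have hd : A.det = ∏ i, hA.eigenvalues i := by
    simpa using hA.det_eq_prod_eigenvalues
  rw [hd]
  calc (1:ℝ) = ∏ _i : n, 1 := Finset.prod_const_one.symm
  _ ≤ ∏ i, hA.eigenvalues i :=
      Finset.prod_le_prod (fun _ _ => zero_le_one) (fun i _ => eig_ge_one hA h i)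

lemma det_le_one_of_one_sub_psd {A : Matrix n n ℝ} (hA : A.PosDef)
    (h : ((1:Matrix n n ℝ) - A).PosSemidef) : A.det ≤ 1 := by
  have hd : A.det = ∏ i, hA.isHermitian.eigenvalues i := by
    simpa using hA.isHermitian.det_eq_prod_eigenvalues
  rw [hd]
  exact Finset.prod_le_one (fun i _ => (hA.eigenvalues_pos i).le)
    (fun i _ => eig_le_one hA.isHermitian h i)

lemma posDef_of_posSemidef_det_ne_zero {A : Matrix n n ℝ} (hA : A.PosSemidef)
    (h : A.det ≠ 0) : A.PosDef := by
  refine .of_dotProduct_mulVec_pos hA.1 fun v hv => ?_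
  rcases eq_or_lt_of_le (hA.dotProduct_mulVec_nonneg v) with heq | hlt
  · exfalso
    have h0 : A *ᵥ v = 0 := (hA.dotProduct_mulVec_zero_iff v).mp heq.symm
    have hinj : Function.Injective (A.mulVec) :=
      Matrix.mulVec_injective_iff_isUnit.mpr ((Matrix.isUnit_iff_isUnit_det A).mpr h.isUnit)
    exact hv (hinj (by simpa using h0))
  · exact hlt

end Spectral

section Bilin

variable {N : ℕ}

lemma bilin_eval (B : (Fin N → ℝ) →L[ℝ] (Fin N → ℝ) →L[ℝ] ℝ) (v : Fin N → ℝ) :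
    v ⬝ᵥ (Matrix.of fun i j => B (Pi.single i 1) (Pi.single j 1)) *ᵥ v = B v v := by
  have hv : v = ∑ i : Fin N, v i • (Pi.single i 1 : Fin N → ℝ) := by
    ext k
    simp [Pi.single_apply]
  have e2 : ∀ i : Fin N, B (Pi.single i 1) v
      = ∑ j, v j * B (Pi.single i 1) (Pi.single j 1) := by
    intro i
    conv_lhs => rw [hv]
    rw [map_sum]
    exact Finset.sum_congr rfl fun j _ => by
      rw [(B (Pi.single i 1)).map_smul, smul_eq_mul]
  have e1 : ∀ w, B v w = ∑ i, v i * B (Pi.single i 1) w := by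
    intro w
    conv_lhs => rw [hv]
    rw [map_sum, ContinuousLinearMap.sum_apply]
    refine Finset.sum_congr rfl fun i _ => ?_
    rw [B.map_smul, ContinuousLinearMap.smul_apply, smul_eq_mul]
  rw [e1 v]
  have e3 : ∀ i ∈ Finset.univ, v i * B (Pi.single i 1) v
      = v i * ∑ j, v j * B (Pi.single i 1) (Pi.single j 1) := fun i _ => by rw [e2 i]
  rw [Finset.sum_congr rfl e3]
  simp only [dotProduct, Matrix.mulVec, Matrix.of_apply, Finset.mul_sum]
  refine Finset.sum_congr rfl fun i _ => ?_
  refine Finset.sum_congr rfl fun j _ => ?_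
  ring

end Bilin

section Clopen

variable {N : ℕ}

lemma posdef_everywhere {M : (Fin N → ℝ) → Matrix (Fin N) (Fin N) ℝ}
    (hcont : ∀ i j, Continuous fun x => M x i j) (hherm : ∀ x, (M x).IsHermitian)
    (hdet : ∀ x, (M x).det ≠ 0) {x₀ : Fin N → ℝ} (h₀ : (M x₀).PosDef) :
    ∀ x, (M x).PosDef := by
  classical
  set q : (Fin N → ℝ) × (Fin N → ℝ) → ℝ := fun p => p.2 ⬝ᵥ (M p.1) *ᵥ p.2 with hqdef
  have hq : Continuous q := by
    have h : Continuous fun p : (Fin N → ℝ) × (Fin N → ℝ) =>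
        ∑ i, p.2 i * ∑ j, M p.1 i j * p.2 j := by
      refine continuous_finset_sum _ fun i _ => ?_
      refine ((continuous_apply i).comp continuous_snd).mul ?_
      refine continuous_finset_sum _ fun j _ => ?_
      exact ((hcont i j).comp continuous_fst).mul ((continuous_apply j).comp continuous_snd)
    have heqq : q = fun p : (Fin N → ℝ) × (Fin N → ℝ) =>
        ∑ i, p.2 i * ∑ j, M p.1 i j * p.2 j := by
      funext p
      simp [hqdef, dotProduct, Matrix.mulVec]
    rw [heqq]
    exact h
  set S : Set (Fin N → ℝ) := {x | (M x).PosDef} with hSdef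
  have hSopen : IsOpen S := by
    rw [isOpen_iff_mem_nhds]
    intro x hx
    set K : Set (Fin N → ℝ) := Metric.sphere 0 1 with hK
    have hWopen : IsOpen {p : (Fin N → ℝ) × (Fin N → ℝ) | 0 < q p} :=
      isOpen_lt continuous_const hq
    have hsub : {x} ×ˢ K ⊆ {p | 0 < q p} := by
      rintro ⟨y, v⟩ ⟨hy, hv⟩
      simp only [Set.mem_singleton_iff] at hy
      subst hy
      have hv0 : v ≠ 0 := by
        intro h
        rw [h] at hv
        simp [hK] at hv
      have := hx.dotProduct_mulVec_pos hv0
      rwa [star_trivial] at this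
    obtain ⟨U, V, hUopen, _, hxU, hKV, hUV⟩ :=
      generalized_tube_lemma isCompact_singleton (isCompact_sphere (0 : Fin N → ℝ) 1)
        hWopen hsub
    refine Filter.mem_of_superset (hUopen.mem_nhds (hxU rfl)) ?_
    intro y hy
    refine .of_dotProduct_mulVec_pos (hherm y) fun v hv => ?_
    rw [star_trivial]
    have hnv : (0:ℝ) < ‖v‖ := norm_pos_iff.mpr hv
    set w : Fin N → ℝ := ‖v‖⁻¹ • v with hw
    have hwK : w ∈ K := by
      simp only [hK, Metric.mem_sphere, dist_zero_right, hw, norm_smul, norm_inv, norm_norm]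
      exact inv_mul_cancel₀ (ne_of_gt hnv)
    have hqw : 0 < q (y, w) := hUV ⟨hy, hKV hwK⟩
    have hvw : v = ‖v‖ • w := by
      rw [hw, smul_smul, mul_inv_cancel₀ (ne_of_gt hnv), one_smul]
    calc (0:ℝ) < ‖v‖ * (‖v‖ * q (y, w)) := by positivity
    _ = v ⬝ᵥ (M y) *ᵥ v := by
        conv_rhs => rw [hvw]
        rw [hqdef]
        simp only [Matrix.mulVec_smul, smul_dotProduct, dotProduct_smul,
          smul_eq_mul]
  have hSclosed : IsClosed S := by
    rw [← isOpen_compl_iff, isOpen_iff_mem_nhds]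
    intro x hx
    have hexv : ∃ v, q (x, v) < 0 := by
      by_contra hno
      push_neg at hno
      have hpsd : (M x).PosSemidef := .of_dotProduct_mulVec_nonneg (hherm x) fun v => by rw [star_trivial]; exact hno v
      exact hx (posDef_of_posSemidef_det_ne_zero hpsd (hdet x))
    obtain ⟨v, hv⟩ := hexv
    have hopen : IsOpen {y | q (y, v) < 0} :=
      isOpen_lt (hq.comp (continuous_id.prodMk continuous_const)) continuous_const
    refine Filter.mem_of_superset (hopen.mem_nhds hv) ?_
    intro y hy hyS
    have hv0 : v ≠ 0 := by
      intro h
      rw [h] at hy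
      simp [hqdef] at hy
    have := hyS.dotProduct_mulVec_pos hv0
    rw [star_trivial] at this
    exact absurd hy (not_lt.mpr this.le)
  have hSuniv : S = Set.univ := IsClopen.eq_univ ⟨hSclosed, hSopen⟩ ⟨x₀, h₀⟩
  intro x
  have hxS : x ∈ S := hSuniv ▸ Set.mem_univ x
  exact hxS

end Clopen

section Periodic2

variable {N : ℕ}

lemma exists_global_max (g : (Fin N → ℝ) → ℝ) (hg : Continuous g)
    (hper : ∀ (x : Fin N → ℝ) (k : Fin N → ℤ), g (x + fun i => (k i : ℝ)) = g x) :
    ∃ x₀, ∀ x, g x ≤ g x₀ := by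
  have hcomp : IsCompact (Set.Icc (0 : Fin N → ℝ) 1) := isCompact_Icc
  have hne : (Set.Icc (0 : Fin N → ℝ) 1).Nonempty := Set.nonempty_Icc.mpr zero_le_one
  obtain ⟨x₀, _, hmax⟩ := hcomp.exists_isMaxOn hne hg.continuousOn
  refine ⟨x₀, fun x => ?_⟩
  set y : Fin N → ℝ := fun i => Int.fract (x i) with hy
  have hyK : y ∈ Set.Icc (0 : Fin N → ℝ) 1 := by
    constructor
    · intro i
      exact Int.fract_nonneg (x i)
    · intro i
      exact (Int.fract_lt_one (x i)).le
  have hxy : g y = g x := by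
    have hagree : y = x + fun i => ((-⌊x i⌋ : ℤ) : ℝ) := by
      ext i
      show Int.fract (x i) = x i + ((-⌊x i⌋ : ℤ) : ℝ)
      rw [Int.fract]
      push_cast
      ring
    rw [hagree, hper]
  rw [← hxy]
  exact hmax hyK

end Periodic2

section Calc2

variable {N : ℕ} {u : (Fin N → ℝ) → ℝ}

lemma hasFDerivAt_fderiv_apply (hu : ContDiff ℝ 2 u) (x : Fin N → ℝ) (w : Fin N → ℝ) :
    HasFDerivAt (fun y => fderiv ℝ u y w) ((fderiv ℝ (fderiv ℝ u) x).flip w) x := by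
  have hD : ContDiff ℝ 1 (fderiv ℝ u) := hu.fderiv_right (by norm_num)
  have hB : HasFDerivAt (fderiv ℝ u) (fderiv ℝ (fderiv ℝ u) x) x :=
    (hD.differentiable (by norm_num) x).hasFDerivAt
  have h := hB.clm_apply (hasFDerivAt_const w x)
  simpa using h

lemma hess_eq_snd (hu : ContDiff ℝ 2 u) (x : Fin N → ℝ) (i j : Fin N) :
    hess u x i j = fderiv ℝ (fderiv ℝ u) x (Pi.single i 1) (Pi.single j 1) := by
  rw [hess, (hasFDerivAt_fderiv_apply hu x (Pi.single j 1)).fderiv]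
  rfl

lemma line_hasDerivAt (hu : ContDiff ℝ 2 u) (x v : Fin N → ℝ) (t : ℝ) :
    HasDerivAt (fun s : ℝ => u (x + s • v)) (fderiv ℝ u (x + t • v) v) t := by
  have hγ : HasDerivAt (fun s : ℝ => x + s • v) v t := by
    simpa using ((hasDerivAt_id t).smul_const v).const_add x
  exact ((hu.differentiable (by norm_num) (x + t • v)).hasFDerivAt).comp_hasDerivAt t hγ

lemma line1_hasDerivAt (hu : ContDiff ℝ 2 u) (x v : Fin N → ℝ) :
    HasDerivAt (fun s : ℝ => fderiv ℝ u (x + s • v) v) (fderiv ℝ (fderiv ℝ u) x v v) 0 := by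
  have hγ : HasDerivAt (fun s : ℝ => x + s • v) v 0 := by
    simpa using ((hasDerivAt_id (0:ℝ)).smul_const v).const_add x
  have h := (hasFDerivAt_fderiv_apply hu x v).comp_hasDerivAt_of_eq (0:ℝ) hγ (by simp)
  exact h

lemma snd_nonpos_at_max (hu : ContDiff ℝ 2 u) {x₀ : Fin N → ℝ} (hmax : ∀ x, u x ≤ u x₀)
    (v : Fin N → ℝ) : fderiv ℝ (fderiv ℝ u) x₀ v v ≤ 0 := by
  refine deriv2_nonpos_at_max (g := fun t : ℝ => u (x₀ + t • v))
    (g1 := fun t : ℝ => fderiv ℝ u (x₀ + t • v) v)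
    (fun t => line_hasDerivAt hu x₀ v t) (line1_hasDerivAt hu x₀ v) ?_
  intro t
  show u (x₀ + t • v) ≤ u (x₀ + (0:ℝ) • v)
  have h0 : x₀ + (0:ℝ) • v = x₀ := by simp
  rw [h0]
  exact hmax _

lemma snd_nonneg_at_min (hu : ContDiff ℝ 2 u) {x₁ : Fin N → ℝ} (hmin : ∀ x, u x₁ ≤ u x)
    (v : Fin N → ℝ) : 0 ≤ fderiv ℝ (fderiv ℝ u) x₁ v v := by
  refine deriv2_nonneg_at_min (g := fun t : ℝ => u (x₁ + t • v))
    (g1 := fun t : ℝ => fderiv ℝ u (x₁ + t • v) v)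
    (fun t => line_hasDerivAt hu x₁ v t) (line1_hasDerivAt hu x₁ v) ?_
  intro t
  show u (x₁ + (0:ℝ) • v) ≤ u (x₁ + t • v)
  have h0 : x₁ + (0:ℝ) • v = x₁ := by simp
  rw [h0]
  exact hmin _

end Calc2


/-- C⁰ a priori estimate: any periodic solution of
`det A[u] = e^{−λu} f (1 + ‖∇u‖²)^p` satisfies `‖u‖_∞ ≤ λ⁻¹ ‖log f‖_∞`. -/
theorem stmt5 {N : ℕ} (hN : 1 ≤ N) (p : ℝ) (hp : 0 ≤ p) (lam : ℝ) (hlam : 0 < lam)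
    (f : (Fin N → ℝ) → ℝ) (hfcont : Continuous f)
    (hfper : ∀ (x : Fin N → ℝ) (k : Fin N → ℤ), f (x + fun i => (k i : ℝ)) = f x)
    (hfpos : ∀ x, 0 < f x)
    (u : (Fin N → ℝ) → ℝ) (hu : ContDiff ℝ 2 u) (hper : ZPeriodic u)
    (heq : ∀ x, (amat u x).det =
      Real.exp (-(lam * u x)) * f x * (1 + gradSq u x) ^ p) :
    ∀ x, |u x| ≤ lam⁻¹ * sSup (Set.range fun y => |Real.log (f y)|) := by
  classical
  have h12 : (1 : WithTop ℕ∞) ≤ 2 := by norm_num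
  have hD : ContDiff ℝ 1 (fderiv ℝ u) := hu.fderiv_right (by norm_num)
  have hesseq : ∀ x (i j : Fin N),
      hess u x i j = fderiv ℝ (fderiv ℝ u) x (Pi.single i 1) (Pi.single j 1) :=
    fun x i j => hess_eq_snd hu x i j
  have hgradcont : ∀ i : Fin N, Continuous fun x => grad u x i := fun i =>
    (hu.continuous_fderiv (by norm_num)).clm_apply continuous_const
  have hhesscont : ∀ i j : Fin N, Continuous fun x => hess u x i j := by
    intro i j
    simp only [hesseq]
    exact ((hD.continuous_fderiv (by norm_num)).clm_apply continuous_const).clm_apply continuous_const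
  have hAcont : ∀ i j : Fin N, Continuous fun x => amat u x i j := by
    intro i j
    have hrw : (fun x => amat u x i j)
        = fun x => (1 : Matrix (Fin N) (Fin N) ℝ) i j + grad u x i * grad u x j
            - hess u x i j := by
      funext x
      simp [amat, Matrix.sub_apply, Matrix.add_apply, Matrix.of_apply]
    rw [hrw]
    exact (continuous_const.add ((hgradcont i).mul (hgradcont j))).sub (hhesscont i j)
  have hsymm : ∀ x (i j : Fin N), hess u x i j = hess u x j i := by
    intro x i j
    rw [hesseq, hesseq]
    exact (hu.contDiffAt.isSymmSndFDerivAt (by simp)) _ _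
  have hherm : ∀ x, (amat u x).IsHermitian := by
    intro x
    show (amat u x)ᴴ = amat u x
    ext i j
    simp only [Matrix.conjTranspose_apply, star_trivial, amat, Matrix.sub_apply,
      Matrix.add_apply, Matrix.of_apply]
    rw [hsymm x j i, mul_comm]
    have h1 : (1 : Matrix (Fin N) (Fin N) ℝ) j i = (1 : Matrix (Fin N) (Fin N) ℝ) i j := by
      simp [Matrix.one_apply, eq_comm]
    rw [h1]
  have hgsq : ∀ x, 0 ≤ gradSq u x := fun x => Finset.sum_nonneg fun i _ => sq_nonneg _
  have hdetpos : ∀ x, 0 < (amat u x).det := by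
    intro x
    rw [heq x]
    have h1 : (0:ℝ) < 1 + gradSq u x := by have := hgsq x; linarith
    exact mul_pos (mul_pos (Real.exp_pos _) (hfpos x)) (Real.rpow_pos_of_pos h1 p)
  obtain ⟨x₀, hmax⟩ := exists_global_max u hu.continuous hper
  obtain ⟨x₁, hmin'⟩ := exists_global_max (fun y => -u y) hu.continuous.neg
    (fun x k => by simp [hper x k])
  have hmin : ∀ x, u x₁ ≤ u x := fun x => by have := hmin' x; simp at this; linarith
  have hD0 : fderiv ℝ u x₀ = 0 :=
    IsLocalMax.fderiv_eq_zero (Filter.Eventually.of_forall fun y => hmax y)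
  have hD1 : fderiv ℝ u x₁ = 0 :=
    IsLocalMin.fderiv_eq_zero (Filter.Eventually.of_forall fun y => hmin y)
  have hgrad0 : ∀ i, grad u x₀ i = 0 := fun i => by simp [grad, hD0]
  have hgrad1 : ∀ i, grad u x₁ i = 0 := fun i => by simp [grad, hD1]
  have hA0 : amat u x₀ - 1
      = Matrix.of (fun i j =>
          (-(fderiv ℝ (fderiv ℝ u) x₀)) (Pi.single i 1) (Pi.single j 1)) := by
    ext i j
    simp [amat, hgrad0, hesseq, Matrix.sub_apply, Matrix.add_apply, Matrix.of_apply,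
      ContinuousLinearMap.neg_apply]
  have hpsd0 : (amat u x₀ - 1).PosSemidef := by
    refine .of_dotProduct_mulVec_nonneg ((hherm x₀).sub Matrix.isHermitian_one) fun v => ?_
    rw [star_trivial, hA0, bilin_eval]
    have hle := snd_nonpos_at_max hu hmax v
    simp only [ContinuousLinearMap.neg_apply]
    linarith
  have hdet0 : 1 ≤ (amat u x₀).det := det_ge_one_of_sub_one_psd (hherm x₀) hpsd0
  have hpd0 : (amat u x₀).PosDef := by
    have h1 : (1 : Matrix (Fin N) (Fin N) ℝ) + (amat u x₀ - 1) = amat u x₀ := by abel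
    rw [← h1]
    exact Matrix.PosDef.add_posSemidef Matrix.PosDef.one hpsd0
  have hpdall : ∀ x, (amat u x).PosDef :=
    posdef_everywhere hAcont hherm (fun x => (hdetpos x).ne') hpd0
  have hA1 : (1 : Matrix (Fin N) (Fin N) ℝ) - amat u x₁
      = Matrix.of (fun i j =>
          (fderiv ℝ (fderiv ℝ u) x₁) (Pi.single i 1) (Pi.single j 1)) := by
    ext i j
    simp [amat, hgrad1, hesseq, Matrix.sub_apply, Matrix.add_apply, Matrix.of_apply]
  have hpsd1 : ((1 : Matrix (Fin N) (Fin N) ℝ) - amat u x₁).PosSemidef := by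
    refine .of_dotProduct_mulVec_nonneg (Matrix.isHermitian_one.sub (hherm x₁)) fun v => ?_
    rw [star_trivial, hA1, bilin_eval]
    exact snd_nonneg_at_min hu hmin v
  have hdet1 : (amat u x₁).det ≤ 1 := det_le_one_of_one_sub_psd (hpdall x₁) hpsd1
  set Mg := sSup (Set.range fun y => |Real.log (f y)|) with hMg
  obtain ⟨y₀, hy₀⟩ := exists_global_max (fun y => |Real.log (f y)|)
    ((hfcont.log (fun y => (hfpos y).ne')).abs) (fun x k => by simp [hfper x k])
  have hbdd : BddAbove (Set.range fun y => |Real.log (f y)|) := by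
    refine ⟨|Real.log (f y₀)|, ?_⟩
    rintro z ⟨y, rfl⟩
    exact hy₀ y
  have hMle : ∀ y, |Real.log (f y)| ≤ Mg := fun y => le_csSup hbdd ⟨y, rfl⟩
  have hgsq0 : gradSq u x₀ = 0 := by simp [gradSq, hgrad0]
  have hgsq1 : gradSq u x₁ = 0 := by simp [gradSq, hgrad1]
  have hub : lam * u x₀ ≤ Mg := by
    have he := heq x₀
    rw [hgsq0, add_zero, Real.one_rpow, mul_one] at he
    rw [he] at hdet0
    have h2 : 0 ≤ Real.log (Real.exp (-(lam * u x₀)) * f x₀) := Real.log_nonneg hdet0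
    rw [Real.log_mul (Real.exp_ne_zero _) (hfpos x₀).ne', Real.log_exp] at h2
    have h3 : Real.log (f x₀) ≤ Mg := le_trans (le_abs_self _) (hMle x₀)
    linarith
  have hlb : -Mg ≤ lam * u x₁ := by
    have he := heq x₁
    rw [hgsq1, add_zero, Real.one_rpow, mul_one] at he
    rw [he] at hdet1
    have h0 : (0:ℝ) ≤ Real.exp (-(lam * u x₁)) * f x₁ :=
      (mul_pos (Real.exp_pos _) (hfpos x₁)).le
    have h2 : Real.log (Real.exp (-(lam * u x₁)) * f x₁) ≤ 0 := Real.log_nonpos h0 hdet1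
    rw [Real.log_mul (Real.exp_ne_zero _) (hfpos x₁).ne', Real.log_exp] at h2
    have h3 : -Mg ≤ Real.log (f x₁) := by
      have h4 := hMle x₁
      have h5 := neg_abs_le (Real.log (f x₁))
      linarith
    linarith
  intro x
  rw [abs_le]
  have hxle : lam * u x ≤ Mg := le_trans (mul_le_mul_of_nonneg_left (hmax x) hlam.le) hub
  have hxge : -Mg ≤ lam * u x := le_trans hlb (mul_le_mul_of_nonneg_left (hmin x) hlam.le)
  have hinv : lam⁻¹ * lam = 1 := inv_mul_cancel₀ hlam.ne'
  have hinvpos : (0:ℝ) ≤ lam⁻¹ := (inv_pos.mpr hlam).le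
  constructor
  · have h6 := mul_le_mul_of_nonneg_left hxge hinvpos
    rw [← mul_assoc, hinv, one_mul, mul_neg] at h6
    linarith
  · have h6 := mul_le_mul_of_nonneg_left hxle hinvpos
    rw [← mul_assoc, hinv, one_mul] at h6
    linarith
end

section
/- Let N ≥ 1 and let m ≥ 2 be an integer. Let r₁, r₂ be real numbers with 0 < r₁ ≤ 1 ≤ r₂, and let K : ℝ^N × (0,∞) → ℝ be a continuous, everywhere strictly positive function, ℤ^N-periodic in the first variable, satisfying K(x, ρ) > ρ^{1−m} whenever ρ < r₁ and K(x, ρ) < ρ^{1−m} whenever ρ > r₂. Then every C², ℤ^N-periodic function u : ℝ^N → ℝ satisfying det A[u](x) = e^{(m−1)u(x)} · K(x, e^{u(x)}) · (1 + ‖∇u(x)‖²)^{(m+1)/2} for all x obeys log r₁ ≤ u(x) ≤ log r₂ for all x. -/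
open Matrix Real

variable {N : ℕ}


/-- 1D second derivative test at a local max. -/
lemma sdt_max {g h : ℝ → ℝ} {q : ℝ} (hg : ∀ t, HasDerivAt g (h t) t)
    (hh : HasDerivAt h q 0) (hmax : IsLocalMax g 0) : q ≤ 0 := by
  by_contra hq
  push_neg at hq
  have h0 : h 0 = 0 := hmax.hasDerivAt_eq_zero (hg 0)
  have hslope : ∀ᶠ t in nhdsWithin (0:ℝ) (Set.Ioi 0), 0 < h t ∧ g t ≤ g 0 := by
    have h1 : ∀ᶠ t in nhdsWithin (0:ℝ) {(0:ℝ)}ᶜ, 0 < h t / t := by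
      have := (hasDerivAt_iff_tendsto_slope.1 hh) (Ioi_mem_nhds hq)
      filter_upwards [this] with t ht
      simpa [slope, h0, div_eq_inv_mul] using ht
    have h1' : ∀ᶠ t in nhdsWithin (0:ℝ) (Set.Ioi 0), 0 < h t / t :=
      h1.filter_mono (nhdsWithin_mono _ (by intro t ht; simpa using (ne_of_gt ht)))
    have h2 : ∀ᶠ t in nhdsWithin (0:ℝ) (Set.Ioi 0), g t ≤ g 0 :=
      nhdsWithin_le_nhds hmax
    filter_upwards [h1', h2, self_mem_nhdsWithin] with t ht hg' ht'
    exact ⟨(div_pos_iff.1 ht).elim (fun h => h.1)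
      (fun h => absurd (Set.mem_Ioi.1 ht') (not_lt.2 h.2.le)), hg'⟩
  obtain ⟨δ, hδ, hsub⟩ := mem_nhdsGT_iff_exists_Ioo_subset.1 hslope
  have hδ0 : (0:ℝ) < δ := hδ
  have key : ∀ t ∈ Set.Ioo (0:ℝ) δ, 0 < h t ∧ g t ≤ g 0 := fun t ht => hsub ht
  have hmono : StrictMonoOn g (Set.Icc (0:ℝ) (δ/2)) := by
    apply strictMonoOn_of_deriv_pos (convex_Icc _ _)
    · exact fun t _ => ((hg t).differentiableAt).continuousAt.continuousWithinAt
    · intro t ht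
      rw [interior_Icc] at ht
      rw [(hg t).deriv]
      exact (key t ⟨ht.1, ht.2.trans (by linarith)⟩).1
  have h1 : g 0 < g (δ/2) := hmono (Set.left_mem_Icc.2 (by linarith))
    (Set.right_mem_Icc.2 (by linarith)) (by linarith)
  exact absurd (key (δ/2) ⟨by linarith, by linarith⟩).2 (not_le.2 h1)

lemma sdt_min {g h : ℝ → ℝ} {q : ℝ} (hg : ∀ t, HasDerivAt g (h t) t)
    (hh : HasDerivAt h q 0) (hmin : IsLocalMin g 0) : 0 ≤ q := by
  have := sdt_max (g := fun t => -g t) (h := fun t => -h t) (q := -q)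
    (fun t => (hg t).neg) hh.neg hmin.neg
  linarith



lemma path_hasDerivAt (x v : Fin N → ℝ) (t : ℝ) :
    HasDerivAt (fun s : ℝ => x + s • v) v t := by
  simpa using ((hasDerivAt_id t).smul_const v).const_add x

lemma line_deriv1 {u : (Fin N → ℝ) → ℝ} (hu : ContDiff ℝ 2 u) (x v : Fin N → ℝ) (t : ℝ) :
    HasDerivAt (fun s : ℝ => u (x + s • v)) (fderiv ℝ u (x + t • v) v) t := by
  have hdiff : DifferentiableAt ℝ u (x + t • v) :=
    (hu.differentiable (by norm_num)).differentiableAt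
  exact hdiff.hasFDerivAt.comp_hasDerivAt t (path_hasDerivAt x v t)

lemma line_deriv2 {u : (Fin N → ℝ) → ℝ} (hu : ContDiff ℝ 2 u) (x v : Fin N → ℝ) :
    HasDerivAt (fun s : ℝ => fderiv ℝ u (x + s • v) v)
      (fderiv ℝ (fderiv ℝ u) x v v) 0 := by
  have hF : ContDiff ℝ 1 (fderiv ℝ u) := hu.fderiv_right (by norm_num)
  have hdF : DifferentiableAt ℝ (fderiv ℝ u) x := (hF.differentiable one_ne_zero).differentiableAt
  have hdF' : HasFDerivAt (fderiv ℝ u) (fderiv ℝ (fderiv ℝ u) x) (x + (0:ℝ) • v) := by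
    rw [show x + (0:ℝ) • v = x by simp]; exact hdF.hasFDerivAt
  have h1 : HasDerivAt (fun s : ℝ => fderiv ℝ u (x + s • v)) (fderiv ℝ (fderiv ℝ u) x v) 0 := by
    have := hdF'.comp_hasDerivAt 0 (path_hasDerivAt x v 0)
    exact this
  have := h1.clm_apply (hasDerivAt_const (0:ℝ) v)
  simpa using this

lemma hess_eq {u : (Fin N → ℝ) → ℝ} (hu : ContDiff ℝ 2 u) (x : Fin N → ℝ) (i j : Fin N) :
    hess u x i j = fderiv ℝ (fderiv ℝ u) x (Pi.single i 1) (Pi.single j 1) := by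
  have hF : ContDiff ℝ 1 (fderiv ℝ u) := hu.fderiv_right (by norm_num)
  have hdF : DifferentiableAt ℝ (fderiv ℝ u) x := (hF.differentiable one_ne_zero).differentiableAt
  have : fderiv ℝ (fun y => fderiv ℝ u y (Pi.single j 1)) x
      = (fderiv ℝ (fderiv ℝ u) x).flip (Pi.single j 1) := by
    rw [fderiv_clm_apply hdF (differentiableAt_const _)]
    simp
  rw [hess, this]
  rfl

lemma hess_symm {u : (Fin N → ℝ) → ℝ} (hu : ContDiff ℝ 2 u) (x : Fin N → ℝ) (v w : Fin N → ℝ) :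
    fderiv ℝ (fderiv ℝ u) x v w = fderiv ℝ (fderiv ℝ u) x w v := by
  have hF : ContDiff ℝ 1 (fderiv ℝ u) := hu.fderiv_right (by norm_num)
  have hdF : DifferentiableAt ℝ (fderiv ℝ u) x := (hF.differentiable one_ne_zero).differentiableAt
  exact second_derivative_symmetric
    (fun y => ((hu.differentiable (by norm_num)).differentiableAt (x := y)).hasFDerivAt)
    hdF.hasFDerivAt v w

lemma pi_expand (v : Fin N → ℝ) : v = ∑ i, v i • (Pi.single i 1 : Fin N → ℝ) := by
  funext j
  simp [Finset.sum_apply, Pi.single_apply]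

lemma lin_expand (L : (Fin N → ℝ) →L[ℝ] ℝ) (v : Fin N → ℝ) :
    L v = ∑ j, v j * L (Pi.single j 1) := by
  conv_lhs => rw [pi_expand v]
  rw [map_sum]
  simp

lemma bilin_expand (B : (Fin N → ℝ) →L[ℝ] ((Fin N → ℝ) →L[ℝ] ℝ)) (v : Fin N → ℝ) :
    B v v = ∑ i, ∑ j, v i * B (Pi.single i 1) (Pi.single j 1) * v j := by
  have h1 : B v v = (B.flip v) v := rfl
  rw [h1, lin_expand (B.flip v) v]
  refine Finset.sum_congr rfl fun i _ => ?_
  have h2 : B.flip v (Pi.single i 1) = B (Pi.single i 1) v := rfl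
  rw [h2, lin_expand (B (Pi.single i 1)) v, Finset.mul_sum]
  refine Finset.sum_congr rfl fun j _ => ?_
  ring

lemma quad_eq {u : (Fin N → ℝ) → ℝ} (hu : ContDiff ℝ 2 u) (x v : Fin N → ℝ) :
    ∑ i, ∑ j, v i * hess u x i j * v j = fderiv ℝ (fderiv ℝ u) x v v := by
  rw [bilin_expand]
  exact Finset.sum_congr rfl fun i _ => Finset.sum_congr rfl fun j _ => by
    rw [hess_eq hu]

variable {N : ℕ}

noncomputable def qf (M : Matrix (Fin N) (Fin N) ℝ) (v : Fin N → ℝ) : ℝ :=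
  dotProduct v (M *ᵥ v)

lemma qf_continuous (M : Matrix (Fin N) (Fin N) ℝ) : Continuous (qf M) := by
  unfold qf dotProduct Matrix.mulVec
  dsimp [dotProduct]
  fun_prop

lemma qf_smul (M : Matrix (Fin N) (Fin N) ℝ) (c : ℝ) (v : Fin N → ℝ) :
    qf M (c • v) = c ^ 2 * qf M v := by
  unfold qf
  rw [Matrix.mulVec_smul, dotProduct_smul, smul_dotProduct]
  ring_nf

noncomputable def lmin (M : Matrix (Fin N) (Fin N) ℝ) : ℝ :=
  sInf (qf M '' Metric.sphere 0 1)

lemma sphere_nonempty' (hN : 1 ≤ N) : (Metric.sphere (0 : Fin N → ℝ) 1).Nonempty := by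
  refine ⟨Pi.single ⟨0, hN⟩ 1, ?_⟩
  simp [Pi.norm_single]

lemma lmin_le (M : Matrix (Fin N) (Fin N) ℝ) {v : Fin N → ℝ} (hv : v ∈ Metric.sphere (0:Fin N → ℝ) 1) :
    lmin M ≤ qf M v := by
  apply csInf_le _ (Set.mem_image_of_mem _ hv)
  exact ((isCompact_sphere (0 : Fin N → ℝ) 1).image (qf_continuous M)).bddBelow

lemma lmin_exists (hN : 1 ≤ N) (M : Matrix (Fin N) (Fin N) ℝ) :
    ∃ v ∈ Metric.sphere (0 : Fin N → ℝ) 1, qf M v = lmin M := by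
  obtain ⟨v, hv, hmin⟩ := (isCompact_sphere (0 : Fin N → ℝ) 1).exists_isMinOn
    (sphere_nonempty' hN) (qf_continuous M).continuousOn
  refine ⟨v, hv, le_antisymm (le_csInf ((sphere_nonempty' hN).image _) ?_) (lmin_le M hv)⟩
  rintro b ⟨w, hw, rfl⟩
  exact hmin hw

lemma norm_sphere_pos {v : Fin N → ℝ} (hv : v ∈ Metric.sphere (0:Fin N → ℝ) 1) : ‖v‖ = 1 := by
  simpa using hv

lemma qf_pos_of_lmin_pos {M : Matrix (Fin N) (Fin N) ℝ} (h : 0 < lmin M)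
    {w : Fin N → ℝ} (hw : w ≠ 0) : 0 < qf M w := by
  have hnw : ‖w‖ ≠ 0 := norm_ne_zero_iff.2 hw
  have hmem : ‖w‖⁻¹ • w ∈ Metric.sphere (0 : Fin N → ℝ) 1 := by
    simp [norm_smul, abs_of_nonneg (norm_nonneg w), inv_mul_cancel₀ hnw]
  have := h.trans_le (lmin_le M hmem)
  rw [qf_smul] at this
  have h2 : 0 < (‖w‖⁻¹) ^ 2 := by positivity
  nlinarith [this]

lemma qf_nonneg_of_lmin_nonneg {M : Matrix (Fin N) (Fin N) ℝ} (h : 0 ≤ lmin M)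
    (w : Fin N → ℝ) : 0 ≤ qf M w := by
  rcases eq_or_ne w 0 with rfl | hw
  · simp [qf]
  have hnw : ‖w‖ ≠ 0 := norm_ne_zero_iff.2 hw
  have hmem : ‖w‖⁻¹ • w ∈ Metric.sphere (0 : Fin N → ℝ) 1 := by
    simp [norm_smul, abs_of_nonneg (norm_nonneg w), inv_mul_cancel₀ hnw]
  have h1 := h.trans (lmin_le M hmem)
  rw [qf_smul] at h1
  have h2 : 0 < (‖w‖⁻¹) ^ 2 := by positivity
  nlinarith [h1]

lemma det_eq_zero_of_lmin_eq_zero (hN : 1 ≤ N) {M : Matrix (Fin N) (Fin N) ℝ}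
    (hsym : Mᵀ = M) (h : lmin M = 0) : M.det = 0 := by
  obtain ⟨v, hv, hqv⟩ := lmin_exists hN M
  have hv0 : v ≠ 0 := by
    intro h0
    have := norm_sphere_pos hv
    rw [h0] at this
    simp at this
  rw [← Matrix.exists_mulVec_eq_zero_iff]
  refine ⟨v, hv0, ?_⟩
  -- M *ᵥ v = 0 since v is a zero of the nonneg quadratic form
  have hnn : ∀ w, 0 ≤ qf M w := qf_nonneg_of_lmin_nonneg h.ge
  have key : ∀ w : Fin N → ℝ, dotProduct w (M *ᵥ v) = 0 := by
    intro w
    by_contra ha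
    set a := dotProduct w (M *ᵥ v) with hadef
    set b := qf M w with hbdef
    have hb : 0 ≤ b := hnn w
    -- expand qf M (v + t • w) = qf v + 2 t a + t^2 b ≥ 0
    have hexp : ∀ t : ℝ, 0 ≤ 2 * t * a + t ^ 2 * b := by
      intro t
      have h1 := hnn (v + t • w)
      have e : qf M (v + t • w) = qf M v + t * dotProduct v (M *ᵥ w)
          + t * dotProduct w (M *ᵥ v) + t ^ 2 * qf M w := by
        unfold qf
        rw [Matrix.mulVec_add, Matrix.mulVec_smul]
        simp only [dotProduct_add, add_dotProduct, smul_dotProduct, dotProduct_smul,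
          smul_eq_mul]
        ring
      have esym : dotProduct v (M *ᵥ w) = dotProduct w (M *ᵥ v) := by
        rw [Matrix.dotProduct_mulVec, ← Matrix.mulVec_transpose, dotProduct_comm, hsym]
      rw [e, esym, hqv, h] at h1
      rw [hadef, hbdef]
      unfold qf at h1 ⊢
      linarith
    -- choose t small with opposite sign to a
    have hδ : ∃ δ : ℝ, 0 < δ ∧ δ * b < 2 := by
      refine ⟨min 1 (1 / (b + 1)), lt_min one_pos (by positivity), ?_⟩
      calc min 1 (1 / (b + 1)) * b ≤ (1 / (b + 1)) * b := by
            apply mul_le_mul_of_nonneg_right (min_le_right _ _) hb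
        _ < 2 := by
            rw [div_mul_eq_mul_div, one_mul]
            rw [div_lt_iff₀ (by linarith)]
            nlinarith
    obtain ⟨δ, hδ0, hδb⟩ := hδ
    have := hexp (-a * δ)
    nlinarith [sq_nonneg a, mul_pos (mul_pos (mul_self_pos.2 ha) hδ0) (sub_pos.2 hδb)]
  funext j
  have := key (Pi.single j 1)
  simpa [dotProduct, Pi.single_apply] using this

lemma lmin_diff_le (M M' : Matrix (Fin N) (Fin N) ℝ) (hN : 1 ≤ N) :
    lmin M ≤ lmin M' + ∑ i, ∑ j, |M i j - M' i j| := by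
  obtain ⟨v, hv, hqv⟩ := lmin_exists hN M'
  have h1 : lmin M ≤ qf M v := lmin_le M hv
  have h2 : qf M v - qf M' v ≤ ∑ i, ∑ j, |M i j - M' i j| := by
    have : qf M v - qf M' v = ∑ i, ∑ j, v i * (M i j - M' i j) * v j := by
      unfold qf dotProduct Matrix.mulVec
      simp only [dotProduct, Finset.mul_sum, ← Finset.sum_sub_distrib]
      refine Finset.sum_congr rfl fun i _ => Finset.sum_congr rfl fun j _ => by ring
    rw [this]
    refine Finset.sum_le_sum fun i _ => Finset.sum_le_sum fun j _ => ?_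
    have hvi : |v i| ≤ 1 := by
      have := norm_le_pi_norm v i
      rwa [norm_sphere_pos hv, Real.norm_eq_abs] at this
    have hvj : |v j| ≤ 1 := by
      have := norm_le_pi_norm v j
      rwa [norm_sphere_pos hv, Real.norm_eq_abs] at this
    calc v i * (M i j - M' i j) * v j ≤ |v i * (M i j - M' i j) * v j| := le_abs_self _
      _ = |v i| * |M i j - M' i j| * |v j| := by rw [abs_mul, abs_mul]
      _ ≤ 1 * |M i j - M' i j| * 1 := by
          apply mul_le_mul (mul_le_mul_of_nonneg_right hvi (abs_nonneg _)) hvj (abs_nonneg _)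
          positivity
      _ = |M i j - M' i j| := by ring
  linarith [h1, h2, hqv]
lemma eigen_qf {M : Matrix (Fin N) (Fin N) ℝ} (hH : M.IsHermitian) (i : Fin N) :
    qf M (hH.eigenvectorBasis i) = hH.eigenvalues i ∧
      dotProduct (α := ℝ) (hH.eigenvectorBasis i) (hH.eigenvectorBasis i) = 1 := by
  have hmv : M *ᵥ (hH.eigenvectorBasis i : Fin N → ℝ)
      = hH.eigenvalues i • (hH.eigenvectorBasis i : Fin N → ℝ) := hH.mulVec_eigenvectorBasis i
  have hnorm : ‖hH.eigenvectorBasis i‖ = 1 := hH.eigenvectorBasis.orthonormal.1 i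
  have hdot : dotProduct (α := ℝ) (hH.eigenvectorBasis i) (hH.eigenvectorBasis i) = 1 := by
    have h2 : (inner ℝ (hH.eigenvectorBasis i) (hH.eigenvectorBasis i) : ℝ)
        = ‖hH.eigenvectorBasis i‖ ^ 2 := real_inner_self_eq_norm_sq _
    rw [hnorm] at h2
    have h3 : (inner ℝ (hH.eigenvectorBasis i) (hH.eigenvectorBasis i) : ℝ)
        = dotProduct (α := ℝ) (hH.eigenvectorBasis i) (hH.eigenvectorBasis i) := by
      rw [PiLp.inner_apply]
      simp [dotProduct, RCLike.inner_apply]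
      simp only [sq]
    rw [h3] at h2
    rw [h2]; norm_num
  refine ⟨?_, hdot⟩
  show dotProduct (α := ℝ) (hH.eigenvectorBasis i) (M *ᵥ (hH.eigenvectorBasis i : Fin N → ℝ)) = _
  rw [hmv, dotProduct_smul, smul_eq_mul, hdot, mul_one]

lemma det_ge_one_of_qf {M : Matrix (Fin N) (Fin N) ℝ} (hH : M.IsHermitian)
    (h1 : ∀ v : Fin N → ℝ, dotProduct v v ≤ qf M v) : 1 ≤ M.det := by
  rw [hH.det_eq_prod_eigenvalues]
  have : ∀ i, 1 ≤ hH.eigenvalues i := by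
    intro i
    obtain ⟨hq, hd⟩ := eigen_qf hH i
    have := h1 (hH.eigenvectorBasis i)
    rw [hq, hd] at this
    exact this
  calc (1:ℝ) = ∏ _i : Fin N, 1 := by simp
    _ ≤ ∏ i, hH.eigenvalues i := Finset.prod_le_prod (by simp) (fun i _ => this i)

lemma det_le_one_of_qf {M : Matrix (Fin N) (Fin N) ℝ} (hH : M.IsHermitian)
    (h1 : ∀ v : Fin N → ℝ, qf M v ≤ dotProduct v v)
    (h2 : ∀ v : Fin N → ℝ, v ≠ 0 → 0 < qf M v) : M.det ≤ 1 := by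
  rw [hH.det_eq_prod_eigenvalues]
  have key : ∀ i, 0 < hH.eigenvalues i ∧ hH.eigenvalues i ≤ 1 := by
    intro i
    obtain ⟨hq, hd⟩ := eigen_qf hH i
    have haux : ∀ w : Fin N → ℝ, dotProduct w w = 1 → w ≠ 0 := by
      intro w hw h0
      rw [h0] at hw
      simp [dotProduct] at hw
    constructor
    · rw [← hq]; exact h2 _ (haux _ hd)
    · have := h1 (hH.eigenvectorBasis i)
      rw [hq, hd] at this
      exact this
  calc ∏ i, hH.eigenvalues i ≤ ∏ _i : Fin N, 1 :=
        Finset.prod_le_prod (fun i _ => (key i).1.le) (fun i _ => (key i).2)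
    _ = 1 := by simp


section Bridge

variable {u : (Fin N → ℝ) → ℝ}

lemma grad_zero_of_max (hu : ContDiff ℝ 2 u) {x : Fin N → ℝ}
    (h : IsLocalMax u x ∨ IsLocalMin u x) : ∀ i, grad u x i = 0 := by
  intro i
  have : fderiv ℝ u x = 0 := by
    rcases h with h | h
    · exact h.fderiv_eq_zero
    · exact h.fderiv_eq_zero
  simp [grad, this]

lemma hessform_nonpos_of_max (hu : ContDiff ℝ 2 u) {x : Fin N → ℝ}
    (h : ∀ y, u y ≤ u x) (v : Fin N → ℝ) : fderiv ℝ (fderiv ℝ u) x v v ≤ 0 := by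
  refine sdt_max (line_deriv1 hu x v) (line_deriv2 hu x v) ?_
  refine Filter.Eventually.of_forall fun s => ?_
  show u (x + s • v) ≤ u (x + (0:ℝ) • v)
  rw [zero_smul, add_zero]
  exact h _

lemma hessform_nonneg_of_min (hu : ContDiff ℝ 2 u) {x : Fin N → ℝ}
    (h : ∀ y, u x ≤ u y) (v : Fin N → ℝ) : 0 ≤ fderiv ℝ (fderiv ℝ u) x v v := by
  refine sdt_min (line_deriv1 hu x v) (line_deriv2 hu x v) ?_
  refine Filter.Eventually.of_forall fun s => ?_
  show u (x + (0:ℝ) • v) ≤ u (x + s • v)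
  rw [zero_smul, add_zero]
  exact h _

lemma amat_hermitian (hu : ContDiff ℝ 2 u) (x : Fin N → ℝ) : (amat u x).IsHermitian := by
  show (amat u x)ᴴ = amat u x
  ext i j
  simp only [Matrix.conjTranspose_apply, star_trivial]
  simp only [amat, Matrix.sub_apply, Matrix.add_apply, Matrix.of_apply, Matrix.one_apply]
  rw [hess_eq hu, hess_eq hu, hess_symm hu x (Pi.single j 1) (Pi.single i 1)]
  by_cases hij : i = j <;> simp [hij, eq_comm, mul_comm]

lemma qf_amat (hu : ContDiff ℝ 2 u) (x v : Fin N → ℝ) :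
    qf (amat u x) v = dotProduct v v + (∑ i, grad u x i * v i) ^ 2
      - fderiv ℝ (fderiv ℝ u) x v v := by
  have hG : qf (Matrix.of (fun i j => grad u x i * grad u x j)) v
      = (∑ i, grad u x i * v i) ^ 2 := by
    unfold qf Matrix.mulVec dotProduct
    simp only [Matrix.of_apply]
    have : ∀ i, ∑ j, grad u x i * grad u x j * v j
        = grad u x i * ∑ j, grad u x j * v j := by
      intro i; rw [Finset.mul_sum]; exact Finset.sum_congr rfl fun j _ => by ring
    calc ∑ i, v i * ∑ j, (fun i j => grad u x i * grad u x j) i j * v j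
        = ∑ i, (grad u x i * v i) * ∑ j, grad u x j * v j := by
          refine Finset.sum_congr rfl fun i _ => ?_
          rw [this i]; ring
      _ = (∑ i, grad u x i * v i) * (∑ j, grad u x j * v j) := by
          rw [← Finset.sum_mul]
      _ = (∑ i, grad u x i * v i) ^ 2 := by ring
  have hH : qf (Matrix.of (fun i j => hess u x i j)) v = fderiv ℝ (fderiv ℝ u) x v v := by
    rw [← quad_eq hu x v]
    unfold qf Matrix.mulVec dotProduct
    simp only [Matrix.of_apply]
    refine Finset.sum_congr rfl fun i _ => ?_
    rw [Finset.mul_sum]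
    exact Finset.sum_congr rfl fun j _ => by ring
  unfold qf at hG hH ⊢
  rw [amat]
  rw [Matrix.sub_mulVec, Matrix.add_mulVec, Matrix.one_mulVec]
  rw [dotProduct_sub, dotProduct_add]
  rw [hG, hH]

lemma amat_continuous (hu : ContDiff ℝ 2 u) (i j : Fin N) :
    Continuous (fun x => amat u x i j) := by
  have hgc : ∀ k : Fin N, Continuous (fun x => grad u x k) := by
    intro k
    have h1 : Continuous (fderiv ℝ u) := hu.continuous_fderiv (by norm_num)
    exact (ContinuousLinearMap.apply ℝ ℝ (Pi.single k 1 : Fin N → ℝ)).continuous.comp h1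
  have hhc : Continuous (fun x => hess u x i j) := by
    have hF : ContDiff ℝ 1 (fderiv ℝ u) := hu.fderiv_right (by norm_num)
    have h1 : Continuous (fderiv ℝ (fderiv ℝ u)) := hF.continuous_fderiv one_ne_zero
    have h2 : Continuous (fun x => fderiv ℝ (fderiv ℝ u) x (Pi.single i 1) (Pi.single j 1)) := by
      apply (ContinuousLinearMap.apply ℝ ℝ ((Pi.single j 1 : Fin N → ℝ))).continuous.comp
      exact (ContinuousLinearMap.apply ℝ ((Fin N → ℝ) →L[ℝ] ℝ)
        ((Pi.single i 1 : Fin N → ℝ))).continuous.comp h1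
    have : (fun x => hess u x i j)
        = fun x => fderiv ℝ (fderiv ℝ u) x (Pi.single i 1) (Pi.single j 1) := by
      funext x; exact hess_eq hu x i j
    rw [this]; exact h2
  simp only [amat, Matrix.sub_apply, Matrix.add_apply, Matrix.of_apply]
  exact ((continuous_const.add ((hgc i).mul (hgc j))).sub hhc)

lemma lmin_amat_continuous (hN : 1 ≤ N) (hu : ContDiff ℝ 2 u) :
    Continuous (fun x => lmin (amat u x)) := by
  rw [continuous_iff_continuousAt]
  intro y
  set g := fun x => lmin (amat u x) with hg
  set D := fun x => ∑ i, ∑ j, |amat u x i j - amat u y i j| with hD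
  have hDc : Continuous D := by
    apply continuous_finset_sum _ fun i _ => continuous_finset_sum _ fun j _ => ?_
    exact ((amat_continuous hu i j).sub continuous_const).abs
  have hDy : D y = 0 := by simp [hD]
  have hub : ∀ x, g x ≤ g y + D x := fun x => lmin_diff_le (amat u x) (amat u y) hN
  have hlb : ∀ x, g y - D x ≤ g x := by
    intro x
    have := lmin_diff_le (amat u y) (amat u x) hN
    have habs : ∀ i j, |amat u y i j - amat u x i j| = |amat u x i j - amat u y i j| :=
      fun i j => abs_sub_comm _ _
    simp only [habs] at this
    simpa [hD] using by linarith [this]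
  have h1 : Filter.Tendsto (fun x => g y - D x) (nhds y) (nhds (g y)) := by
    have := Filter.Tendsto.sub (tendsto_const_nhds (x := g y) (f := nhds y)) (hDc.tendsto y)
    simpa [hDy] using this
  have h2 : Filter.Tendsto (fun x => g y + D x) (nhds y) (nhds (g y)) := by
    have := Filter.Tendsto.add (tendsto_const_nhds (x := g y) (f := nhds y)) (hDc.tendsto y)
    simpa [hDy] using this
  exact tendsto_of_tendsto_of_tendsto_of_le_of_le h1 h2 hlb hub

end Bridge

/-- C⁰ a priori estimate under the barrier conditions (1.2): any periodic solution of
`det A[u] = e^{(m−1)u} K(x, e^u) (1 + ‖∇u‖²)^{(m+1)/2}` satisfies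
`log r₁ ≤ u ≤ log r₂`. -/
theorem stmt9 {N : ℕ} (hN : 1 ≤ N) (m : ℕ) (hm : 2 ≤ m)
    (r₁ r₂ : ℝ) (hr₁pos : 0 < r₁) (hr₁ : r₁ ≤ 1) (hr₂ : 1 ≤ r₂)
    (K : (Fin N → ℝ) → ℝ → ℝ)
    (hKcont : ContinuousOn (fun q : (Fin N → ℝ) × ℝ => K q.1 q.2)
      (Set.univ ×ˢ Set.Ioi (0 : ℝ)))
    (hKpos : ∀ x ρ, 0 < ρ → 0 < K x ρ)
    (hKper : ∀ (x : Fin N → ℝ) (k : Fin N → ℤ) (ρ : ℝ),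
      K (x + fun i => (k i : ℝ)) ρ = K x ρ)
    (hbar₁ : ∀ x ρ, 0 < ρ → ρ < r₁ → ρ ^ ((1 : ℤ) - (m : ℤ)) < K x ρ)
    (hbar₂ : ∀ x ρ, r₂ < ρ → K x ρ < ρ ^ ((1 : ℤ) - (m : ℤ)))
    (u : (Fin N → ℝ) → ℝ) (hu : ContDiff ℝ 2 u) (hper : ZPeriodic u)
    (heq : ∀ x, (amat u x).det =
      Real.exp (((m : ℝ) - 1) * u x) * K x (Real.exp (u x)) *
        (1 + gradSq u x) ^ (((m : ℝ) + 1) / 2)) :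
    ∀ x, Real.log r₁ ≤ u x ∧ u x ≤ Real.log r₂ := by
  -- the statement's rpow exponent is positive stuff
  -- Step 1: extrema of u exist by periodicity
  have hcont : Continuous u := hu.continuous
  have hCc : IsCompact (Set.Icc (0 : Fin N → ℝ) 1) := isCompact_Icc
  have hCne : (Set.Icc (0 : Fin N → ℝ) 1).Nonempty := ⟨0, Set.left_mem_Icc.2 zero_le_one⟩
  obtain ⟨x₁, _, hmax'⟩ := hCc.exists_isMaxOn hCne hcont.continuousOn
  obtain ⟨x₀, _, hmin'⟩ := hCc.exists_isMinOn hCne hcont.continuousOn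
  have hreduce : ∀ y : Fin N → ℝ, ∃ z ∈ Set.Icc (0 : Fin N → ℝ) 1, u y = u z := by
    intro y
    refine ⟨fun i => Int.fract (y i), ?_, ?_⟩
    · constructor
      · intro i; exact Int.fract_nonneg _
      · intro i; exact (Int.fract_lt_one _).le
    · have := hper (fun i => Int.fract (y i)) (fun i => ⌊y i⌋)
      rw [← this]
      congr 1
      funext i
      simp only [Pi.add_apply]
      exact (Int.fract_add_floor (y i)).symm
  have hmax : ∀ y, u y ≤ u x₁ := by
    intro y; obtain ⟨z, hz, hy⟩ := hreduce y; rw [hy]; exact hmax' hz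
  have hmin : ∀ y, u x₀ ≤ u y := by
    intro y; obtain ⟨z, hz, hy⟩ := hreduce y; rw [hy]; exact hmin' hz
  -- gradients vanish at extrema
  have hgrad1 : ∀ i, grad u x₁ i = 0 :=
    grad_zero_of_max hu (Or.inl (Filter.Eventually.of_forall fun y => hmax y))
  have hgrad0 : ∀ i, grad u x₀ i = 0 :=
    grad_zero_of_max hu (Or.inr (Filter.Eventually.of_forall fun y => hmin y))
  have hgs1 : gradSq u x₁ = 0 := by
    unfold gradSq; refine Finset.sum_eq_zero fun i _ => by rw [hgrad1 i]; ring
  have hgs0 : gradSq u x₀ = 0 := by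
    unfold gradSq; refine Finset.sum_eq_zero fun i _ => by rw [hgrad0 i]; ring
  -- determinant equation at extrema
  have hdet1 : (amat u x₁).det
      = Real.exp (((m : ℝ) - 1) * u x₁) * K x₁ (Real.exp (u x₁)) := by
    rw [heq x₁, hgs1]
    norm_num
  have hdet0 : (amat u x₀).det
      = Real.exp (((m : ℝ) - 1) * u x₀) * K x₀ (Real.exp (u x₀)) := by
    rw [heq x₀, hgs0]
    norm_num
  -- det(amat) > 0 everywhere
  have hdetpos : ∀ x, 0 < (amat u x).det := by
    intro x
    rw [heq x]
    have h1 : (0:ℝ) < 1 + gradSq u x := by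
      have : 0 ≤ gradSq u x := Finset.sum_nonneg fun i _ => sq_nonneg _
      linarith
    have := hKpos x (Real.exp (u x)) (Real.exp_pos _)
    positivity
  -- qf lower bound at the max point
  have hqf1 : ∀ v : Fin N → ℝ, dotProduct v v ≤ qf (amat u x₁) v := by
    intro v
    rw [qf_amat hu x₁ v]
    have h1 := hessform_nonpos_of_max hu hmax v
    have h2 : (∑ i, grad u x₁ i * v i) = 0 :=
      Finset.sum_eq_zero fun i _ => by rw [hgrad1 i]; ring
    rw [h2]
    nlinarith
  -- det at max point ≥ 1
  have hdet1ge : 1 ≤ (amat u x₁).det :=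
    det_ge_one_of_qf (amat_hermitian hu x₁) hqf1
  -- lmin positive at the max point
  have hlmin1 : 0 < lmin (amat u x₁) := by
    obtain ⟨v, hv, hqv⟩ := lmin_exists hN (amat u x₁)
    rw [← hqv]
    have hvne : v ≠ 0 := by
      intro h0
      have := norm_sphere_pos hv
      rw [h0] at this; simp at this
    have h2 : 0 < dotProduct v v :=
      lt_of_le_of_ne (Finset.sum_nonneg fun i _ => mul_self_nonneg _)
        (fun h => hvne (dotProduct_self_eq_zero.1 h.symm))
    exact h2.trans_le (hqf1 v)
  -- lmin never vanishes
  have hlminne : ∀ x, lmin (amat u x) ≠ 0 := by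
    intro x h0
    have hsym : (amat u x)ᵀ = amat u x := by
      have := amat_hermitian hu x
      simpa [Matrix.IsHermitian, Matrix.conjTranspose_eq_transpose_of_trivial] using this
    have := det_eq_zero_of_lmin_eq_zero hN hsym h0
    exact (hdetpos x).ne' this
  -- by IVT, lmin positive at the min point
  have hlmin0 : 0 < lmin (amat u x₀) := by
    by_contra hle
    push_neg at hle
    haveI : PreconnectedSpace (Fin N → ℝ) :=
      ⟨by simpa using (convex_univ (𝕜 := ℝ) (E := Fin N → ℝ)).isPreconnected⟩
    have hsub := intermediate_value_univ (f := fun x => lmin (amat u x)) x₀ x₁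
      (lmin_amat_continuous hN hu)
    have h0mem : (0:ℝ) ∈ Set.Icc (lmin (amat u x₀)) (lmin (amat u x₁)) :=
      ⟨hle, hlmin1.le⟩
    obtain ⟨x, hx⟩ := hsub h0mem
    exact hlminne x hx
  -- det at min point ≤ 1
  have hqf0 : ∀ v : Fin N → ℝ, qf (amat u x₀) v ≤ dotProduct v v := by
    intro v
    rw [qf_amat hu x₀ v]
    have h1 := hessform_nonneg_of_min hu hmin v
    have h2 : (∑ i, grad u x₀ i * v i) = 0 :=
      Finset.sum_eq_zero fun i _ => by rw [hgrad0 i]; ring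
    rw [h2]
    nlinarith
  have hdet0le : (amat u x₀).det ≤ 1 :=
    det_le_one_of_qf (amat_hermitian hu x₀) hqf0
      (fun v hv => qf_pos_of_lmin_pos hlmin0 hv)
  -- exponent identity
  have hexpid : ∀ t : ℝ, Real.exp t ^ ((1 : ℤ) - (m : ℤ)) * Real.exp (((m:ℝ) - 1) * t) = 1 := by
    intro t
    have h1 : Real.exp t ^ ((1 : ℤ) - (m : ℤ))
        = Real.exp ((((1 : ℤ) - (m : ℤ)) : ℝ) * t) := by
      rw [← Real.rpow_intCast (Real.exp t) ((1 : ℤ) - (m : ℤ))]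
      rw [Real.rpow_def_of_pos (Real.exp_pos t), Real.log_exp]
      congr 1
      push_cast
      ring
    rw [h1, ← Real.exp_add, Real.exp_eq_one_iff]
    push_cast
    ring
  -- conclude bounds at extrema
  have hub : u x₁ ≤ Real.log r₂ := by
    by_contra hgt
    push_neg at hgt
    have hρ : r₂ < Real.exp (u x₁) := by
      have := Real.exp_lt_exp.2 hgt
      rwa [Real.exp_log (by linarith : (0:ℝ) < r₂)] at this
    have hK := hbar₂ x₁ (Real.exp (u x₁)) hρ
    have hKp := hKpos x₁ (Real.exp (u x₁)) (Real.exp_pos _)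
    have hstep : (amat u x₁).det
        < Real.exp (((m:ℝ) - 1) * u x₁) * (Real.exp (u x₁)) ^ ((1 : ℤ) - (m : ℤ)) := by
      rw [hdet1]
      exact mul_lt_mul_of_pos_left hK (Real.exp_pos _)
    rw [mul_comm, hexpid (u x₁)] at hstep
    linarith
  have hlb : Real.log r₁ ≤ u x₀ := by
    by_contra hlt
    push_neg at hlt
    have hρ : Real.exp (u x₀) < r₁ := by
      have := Real.exp_lt_exp.2 hlt
      rwa [Real.exp_log hr₁pos] at this
    have hK := hbar₁ x₀ (Real.exp (u x₀)) (Real.exp_pos _) hρ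
    have hstep : Real.exp (((m:ℝ) - 1) * u x₀) * (Real.exp (u x₀)) ^ ((1 : ℤ) - (m : ℤ))
        < (amat u x₀).det := by
      rw [hdet0]
      exact mul_lt_mul_of_pos_left hK (Real.exp_pos _)
    rw [mul_comm (Real.exp (((m:ℝ) - 1) * u x₀)), hexpid (u x₀)] at hstep
    linarith
  intro x
  exact ⟨le_trans hlb (hmin x), le_trans (hmax x) hub⟩
end
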